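/- arXiv:2604.18746 — 3 statements merged into one kernel-verified Lean document; each statement's English description precedes it below -/
import Mathlib

section
/- Any d-detecting family on a finite set U with d ≥ 2 must have size at least |U| · log₂(d) / log₂(d·|U|+1); in particular, since the vector of subset sums over a family F of size s with values bounded by (d−1)|U| can take at most ((d−1)|U|+1)^s values, injectivity forces d^{|U|} ≤ ((d−1)|U|+1)^{|F|}. -/
def DetectingFamily {U : Type*} [Fintype U] (d : ℕ) (F : Finset (Finset U)) : Prop :=
  ∀ f g : U → Fin d, f ≠ g → ∃ S ∈ F, ∑ x ∈ S, (f x : ℕ) ≠ ∑ x ∈ S, (g x : ℕ)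

/-- Lower bound on the size of a `d`-detecting family: injectivity of the subset-sum
vector forces `d ^ |U| ≤ ((d−1)|U|+1) ^ |F|`, and hence
`|F| ≥ |U| · log₂ d / log₂ (d·|U|+1)`. -/
theorem stmt3 {U : Type*} [Fintype U] [Nonempty U] (d : ℕ) (hd : 2 ≤ d)
    (F : Finset (Finset U)) (hF : DetectingFamily d F) :
    d ^ Fintype.card U ≤ ((d - 1) * Fintype.card U + 1) ^ F.card ∧
    (Fintype.card U : ℝ) * Real.logb 2 d / Real.logb 2 (d * Fintype.card U + 1)
      ≤ (F.card : ℝ) := by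
  classical
  set n := Fintype.card U with hn
  set m := (d - 1) * n + 1 with hm
  have hbound : ∀ (f : U → Fin d) (S : Finset U), ∑ x ∈ S, (f x : ℕ) < m := by
    intro f S
    have h1 : ∑ x ∈ S, (f x : ℕ) ≤ ∑ _x ∈ S, (d - 1) := by
      apply Finset.sum_le_sum
      intro i _
      exact Nat.le_sub_one_of_lt (f i).isLt
    have h2 : ∑ _x ∈ S, (d - 1) = (d - 1) * S.card := by
      rw [Finset.sum_const, smul_eq_mul, Nat.mul_comm]
    have h3 : S.card ≤ n := Finset.card_le_univ S
    calc ∑ x ∈ S, (f x : ℕ) ≤ (d - 1) * S.card := by rw [← h2]; exact h1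
      _ ≤ (d - 1) * n := Nat.mul_le_mul_left _ h3
      _ < m := Nat.lt_succ_self _
  have hΦ : Function.Injective
      (fun (f : U → Fin d) (S : F) => (⟨∑ x ∈ (S : Finset U), (f x : ℕ), hbound f S⟩ : Fin m)) := by
    intro f g h
    by_contra hne
    obtain ⟨S, hS, hsum⟩ := hF f g hne
    exact hsum (congrArg Fin.val (congrFun h ⟨S, hS⟩))
  have hcard := Fintype.card_le_of_injective _ hΦ
  simp only [Fintype.card_fun, Fintype.card_fin, Fintype.card_coe] at hcard
  refine ⟨hcard, ?_⟩
  -- real part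
  have h2 : (d : ℕ) ^ n ≤ (d * n + 1) ^ F.card := by
    refine le_trans hcard (Nat.pow_le_pow_left ?_ _)
    have : (d - 1) * n ≤ d * n := Nat.mul_le_mul_right _ (Nat.sub_le _ _)
    omega
  have hn1 : 1 ≤ n := Fintype.card_pos
  have hdn : (1 : ℝ) < (d * n + 1 : ℕ) := by
    have : 2 ≤ d * n := le_trans hd (Nat.le_mul_of_pos_right d hn1)
    exact_mod_cast by omega
  have hlogpos : 0 < Real.logb 2 ((d : ℝ) * n + 1) := by
    apply Real.logb_pos one_lt_two
    exact_mod_cast hdn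
  rw [div_le_iff₀ hlogpos]
  have hR : ((d : ℝ)) ^ n ≤ ((d : ℝ) * n + 1) ^ F.card := by
    have := h2
    push_cast at this ⊢
    exact_mod_cast this
  have hlog := Real.logb_le_logb_of_le one_lt_two (by positivity) hR
  rw [Real.logb_pow, Real.logb_pow] at hlog
  exact hlog
end

section
/- Let G be a graph, c a capacity function, and S a capacitated vertex cover of G with |S| ≤ k. If a vertex v has at least k+1 pendant neighbors (degree-one vertices adjacent only to v), then v ∈ S. -/
/-- `S` together with the edge-assignment `f` is a capacitated vertex cover of `G`
with capacities `c`: every edge is assigned to one of its endpoints, that endpoint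
lies in `S`, and every vertex of `S` receives at most `c v` edges. -/
def IsCVC {V : Type*} [Fintype V] [DecidableEq V] (G : SimpleGraph V)
    [DecidableRel G.Adj] (c : V → ℕ) (S : Finset V) (f : Sym2 V → V) : Prop :=
  (∀ e ∈ G.edgeFinset, f e ∈ e ∧ f e ∈ S) ∧
  ∀ v ∈ S, (G.edgeFinset.filter (fun e => f e = v)).card ≤ c v

/-- If `S` is a capacitated vertex cover of size at most `k` and `v` has at least
`k+1` pendant neighbors, then `v ∈ S`. -/
theorem stmt5 {V : Type*} [Fintype V] [DecidableEq V] (G : SimpleGraph V)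
    [DecidableRel G.Adj] (c : V → ℕ) (k : ℕ) (S : Finset V) (f : Sym2 V → V)
    (hS : IsCVC G c S f) (hk : S.card ≤ k)
    (v : V) (P : Finset V) (hP : k + 1 ≤ P.card)
    (hpend : ∀ u ∈ P, G.degree u = 1 ∧ G.Adj u v) :
    v ∈ S := by
  by_contra hv
  have hsub : P ⊆ S := by
    intro u hu
    have hadj := (hpend u hu).2
    have he : s(u, v) ∈ G.edgeFinset := by
      rw [SimpleGraph.mem_edgeFinset]; exact hadj
    obtain ⟨hmem, hin⟩ := hS.1 _ he
    rcases Sym2.mem_iff.mp hmem with h | h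
    · rwa [h] at hin
    · exact absurd (h ▸ hin) hv
  have := Finset.card_le_card hsub
  omega
end

section
/- Feasible orientations of minimum size compose along cuts: let G have linear arrangement π, and for i ∈ [0,n] call an orientation i-feasible if every vertex among the first i respects its capacity, with i-size the number of the first i vertices of positive in-degree. If O' is (i−1)-feasible with (i−1)-signature σ' and one reorients exactly the edges from v_i to later vertices according to a target signature σ that agrees with σ' on δ_{i−1} ∩ δ_i, then the resulting orientation O has i-signature σ, every vertex among the first i−1 has the same in-degree in O as in O', and indeg_O(v_i) = a_i(σ') + b_i(σ). -/
/-- The set of edges of `G` crossing the cut after the first `i` vertices of the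
linear arrangement `π`. -/
def cutEdges {V : Type*} {n : ℕ} (G : SimpleGraph V) (π : V ≃ Fin n) (i : ℕ) :
    Set (Sym2 V) :=
  {e ∈ G.edgeSet | ∃ u w, e = s(u, w) ∧ (π u : ℕ) < i ∧ i ≤ (π w : ℕ)}

/-- Composition along cuts: starting from an orientation `f'` with `(i)`-cut
signature extending to a target signature `σ` that agrees with it on
`δ_i ∩ δ_{i+1}`, reorienting exactly the edges from `v_i` to later vertices
according to `σ` yields an orientation `g` whose `(i+1)`-cut signature is `σ`,
which preserves the in-degrees of all earlier vertices, and in which the in-degree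
of `v_i` equals `a_i(σ') + b_i(σ)`. -/
theorem stmt15 {V : Type*} [Fintype V] {n : ℕ} (G : SimpleGraph V) (π : V ≃ Fin n)
    (i : Fin n) (f' σ g : Sym2 V → V)
    (hf' : ∀ e ∈ G.edgeSet, f' e ∈ e)
    (hσ : ∀ e ∈ cutEdges G π ((i : ℕ) + 1), σ e ∈ e)
    (hagree : ∀ e ∈ cutEdges G π (i : ℕ) ∩ cutEdges G π ((i : ℕ) + 1), σ e = f' e)
    (hg : ∀ e : Sym2 V,
      ((∃ w, e = s(π.symm i, w) ∧ (i : ℕ) < (π w : ℕ)) → g e = σ e) ∧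
      (¬ (∃ w, e = s(π.symm i, w) ∧ (i : ℕ) < (π w : ℕ)) → g e = f' e)) :
    (∀ e ∈ cutEdges G π ((i : ℕ) + 1), g e = σ e) ∧
    (∀ v : V, (π v : ℕ) < (i : ℕ) →
      {e ∈ G.edgeSet | g e = v}.ncard = {e ∈ G.edgeSet | f' e = v}.ncard) ∧
    {e ∈ G.edgeSet | g e = π.symm i}.ncard =
      {e ∈ G.edgeSet |
        f' e = π.symm i ∧ ∃ u, e = s(u, π.symm i) ∧ (π u : ℕ) < (i : ℕ)}.ncard +
      {e ∈ G.edgeSet |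
        σ e = π.symm i ∧ ∃ w, e = s(π.symm i, w) ∧ (i : ℕ) < (π w : ℕ)}.ncard := by
  classical
  have hπv : (π (π.symm i) : ℕ) = (i : ℕ) := by simp
  set v : V := π.symm i with hvdef
  -- helper: an edge s(u,w) with π u < i cannot be of the form s(v, w') with i < π w'
  have hnP : ∀ u w : V, (π u : ℕ) < (i : ℕ) →
      ¬ (∃ w', s(u, w) = s(v, w') ∧ (i : ℕ) < (π w' : ℕ)) := by
    rintro u w hu ⟨w', heq, hw'⟩
    rw [Sym2.eq_iff] at heq
    rcases heq with ⟨h1, h2⟩ | ⟨h1, h2⟩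
    · rw [h1] at hu; omega
    · rw [h1] at hu; omega
  refine ⟨?_, ?_, ?_⟩
  · rintro e ⟨heE, u, w, rfl, hu, hw⟩
    by_cases hui : (π u : ℕ) < (i : ℕ)
    · rw [(hg _).2 (hnP u w hui)]
      exact (hagree _ ⟨⟨heE, u, w, rfl, hui, by omega⟩, ⟨heE, u, w, rfl, hu, hw⟩⟩).symm
    · have hu' : u = v := π.injective (Fin.ext (by omega))
      rw [hu']
      exact (hg _).1 ⟨w, rfl, by omega⟩
  · intro v' hv'
    congr 1
    ext e
    simp only [Set.mem_setOf_eq]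
    constructor
    · rintro ⟨heE, hge⟩
      refine ⟨heE, ?_⟩
      by_cases hP : ∃ w, e = s(v, w) ∧ (i : ℕ) < (π w : ℕ)
      · exfalso
        obtain ⟨w, rfl, hw⟩ := hP
        rw [(hg _).1 ⟨w, rfl, hw⟩] at hge
        have hmem := hσ _ ⟨heE, v, w, rfl, by omega, by omega⟩
        rw [Sym2.mem_iff] at hmem
        rcases hmem with h | h
        · rw [h] at hge
          have h2 := hπv
          rw [hge] at h2
          omega
        · rw [h] at hge
          rw [hge] at hw
          omega
      · rw [← (hg _).2 hP]; exact hge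
    · rintro ⟨heE, hfe⟩
      refine ⟨heE, ?_⟩
      by_cases hP : ∃ w, e = s(v, w) ∧ (i : ℕ) < (π w : ℕ)
      · exfalso
        obtain ⟨w, rfl, hw⟩ := hP
        have hmem := hf' _ heE
        rw [Sym2.mem_iff] at hmem
        rcases hmem with h | h
        · rw [hfe] at h
          rw [h] at hv'
          omega
        · rw [hfe] at h
          rw [h] at hv'
          omega
      · rw [(hg _).2 hP]; exact hfe
  · have hset : {e ∈ G.edgeSet | g e = v} =
        {e ∈ G.edgeSet | f' e = v ∧ ∃ u, e = s(u, v) ∧ (π u : ℕ) < (i : ℕ)} ∪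
        {e ∈ G.edgeSet | σ e = v ∧ ∃ w, e = s(v, w) ∧ (i : ℕ) < (π w : ℕ)} := by
      ext e
      simp only [Set.mem_setOf_eq, Set.mem_union]
      constructor
      · rintro ⟨heE, hge⟩
        by_cases hP : ∃ w, e = s(v, w) ∧ (i : ℕ) < (π w : ℕ)
        · right
          exact ⟨heE, by rw [← (hg _).1 hP]; exact hge, hP⟩
        · left
          have hfe : f' e = v := by rw [← (hg _).2 hP]; exact hge
          refine ⟨heE, hfe, ?_⟩
          have hmem := hf' _ heE
          rw [hfe] at hmem
          -- v ∈ e, so e = s(u, v) for some u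
          obtain ⟨u, rfl⟩ := Sym2.mem_iff_exists.mp hmem
          refine ⟨u, ?_, ?_⟩
          · exact Sym2.eq_swap
          have hne : v ≠ u := by
            rintro rfl
            exact (G.irrefl (G.mem_edgeSet.mp heE))
          have : (π u : ℕ) ≠ (i : ℕ) := by
            intro h
            exact hne (π.injective (Fin.ext (by omega))).symm
          by_contra hc
          exact hP ⟨u, rfl, by omega⟩
      · rintro (⟨heE, hfe, u, rfl, hu⟩ | ⟨heE, hσe, hP⟩)
        · exact ⟨heE, by rw [(hg _).2 (hnP u v hu)]; exact hfe⟩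
        · exact ⟨heE, by rw [(hg _).1 hP]; exact hσe⟩
    rw [hset]
    rw [Set.ncard_union_eq ?_ (Set.toFinite _) (Set.toFinite _)]
    rw [Set.disjoint_left]
    rintro e ⟨heE, hfe, u, rfl, hu⟩ ⟨-, -, w, heq, hw⟩
    rw [Sym2.eq_iff] at heq
    rcases heq with ⟨h1, h2⟩ | ⟨h1, h2⟩
    · rw [h1] at hu; omega
    · rw [h1] at hu; omega
end
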